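/- arXiv:0812.0089 — 2 statements merged into one kernel-verified Lean document; each statement's English description precedes it below -/
import Mathlib

section
/- Let α ≥ 0 be a real number, let σ₁, …, σₙ be complex numbers with |σᵢ| < 1/2 for every i, and let c₁, …, cₙ be complex numbers. Then the sum Σᵢ Σⱼ conj(cᵢ)·cⱼ·exp(−α·log(1 − 4·conj(σᵢ)·σⱼ)) is a nonnegative real number, i.e. the kernel (σ, ρ) ↦ exp(−α·log(1 − 4·conj(σ)·ρ)) = (1 − 4·conj(σ)·ρ)^{−α} is positive semidefinite on the open disk {z ∈ ℂ : |z| < 1/2}. -/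
open Finset Complex

/-- Kernels on `Fin n` that admit an expansion `∑ m, b m * conj (σ i) ^ m * σ j ^ m`
with nonnegative coefficients `b`. -/
def GoodKer {n : ℕ} (σ : Fin n → ℂ) (M : Fin n → Fin n → ℂ) : Prop :=
  ∃ b : ℕ → ℝ, (∀ m, 0 ≤ b m) ∧
    (∀ i j, Summable fun m => b m * (‖σ i‖ * ‖σ j‖) ^ m) ∧
    (∀ i j, HasSum (fun m => (b m : ℂ) * ((starRingEnd ℂ) (σ i)) ^ m * (σ j) ^ m) (M i j))

lemma goodKer_norm {n : ℕ} (σ : Fin n → ℂ) {b : ℕ → ℝ} (hb : ∀ m, 0 ≤ b m)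
    (i j : Fin n) (m : ℕ) :
    ‖(b m : ℂ) * ((starRingEnd ℂ) (σ i)) ^ m * (σ j) ^ m‖ = b m * (‖σ i‖ * ‖σ j‖) ^ m := by
  rw [norm_mul, norm_mul, norm_pow, norm_pow, RingHomIsometric.norm_map, Complex.norm_real,
    Real.norm_eq_abs, _root_.abs_of_nonneg (hb m), mul_pow]
  ring

lemma goodKer_one {n : ℕ} (σ : Fin n → ℂ) : GoodKer σ (fun _ _ => 1) := by
  refine ⟨fun m => if m = 0 then 1 else 0, fun m => by positivity, fun i j => ?_, fun i j => ?_⟩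
  · apply summable_of_ne_finset_zero (s := {0})
    intro m hm
    simp only [mem_singleton] at hm
    simp [hm]
  · have := hasSum_single (f := fun m : ℕ =>
      (((if m = 0 then (1:ℝ) else 0) : ℝ) : ℂ) * ((starRingEnd ℂ) (σ i)) ^ m * (σ j) ^ m) 0
      (fun b hb => by simp [hb])
    simpa using this

lemma goodKer_mul {n : ℕ} (σ : Fin n → ℂ) {M M' : Fin n → Fin n → ℂ}
    (h : GoodKer σ M) (h' : GoodKer σ M') :
    GoodKer σ (fun i j => M i j * M' i j) := by
  obtain ⟨b, hb0, hbs, hbh⟩ := h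
  obtain ⟨b', hb'0, hb's, hb'h⟩ := h'
  refine ⟨fun m => ∑ kl ∈ antidiagonal m, b kl.1 * b' kl.2,
    fun m => Finset.sum_nonneg fun kl _ => mul_nonneg (hb0 _) (hb'0 _), fun i j => ?_, fun i j => ?_⟩
  · set q : ℝ := ‖σ i‖ * ‖σ j‖ with hq
    have hq0 : 0 ≤ q := mul_nonneg (norm_nonneg _) (norm_nonneg _)
    have hf : Summable fun m => ‖b m * q ^ m‖ := by
      refine (hbs i j).congr fun m => ?_
      rw [Real.norm_eq_abs, _root_.abs_of_nonneg (mul_nonneg (hb0 m) (pow_nonneg hq0 m))]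
    have hg : Summable fun m => ‖b' m * q ^ m‖ := by
      refine (hb's i j).congr fun m => ?_
      rw [Real.norm_eq_abs, _root_.abs_of_nonneg (mul_nonneg (hb'0 m) (pow_nonneg hq0 m))]
    have hs := summable_sum_mul_antidiagonal_of_summable_norm' hf hf.of_norm hg hg.of_norm
    refine hs.congr fun m => ?_
    rw [Finset.sum_mul]
    refine Finset.sum_congr rfl fun kl hkl => ?_
    rw [Finset.HasAntidiagonal.mem_antidiagonal] at hkl
    rw [← hkl, pow_add]
    ring
  · set F : ℕ → ℂ := fun m => (b m : ℂ) * ((starRingEnd ℂ) (σ i)) ^ m * (σ j) ^ m with hF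
    set G : ℕ → ℂ := fun m => (b' m : ℂ) * ((starRingEnd ℂ) (σ i)) ^ m * (σ j) ^ m with hG
    have hFn : Summable fun m => ‖F m‖ := by
      simp only [hF, goodKer_norm σ hb0]; exact hbs i j
    have hGn : Summable fun m => ‖G m‖ := by
      simp only [hG, goodKer_norm σ hb'0]; exact hb's i j
    have key : (fun m : ℕ => ∑ kl ∈ antidiagonal m, F kl.1 * G kl.2)
        = fun m => ((∑ kl ∈ antidiagonal m, b kl.1 * b' kl.2 : ℝ) : ℂ) *
          ((starRingEnd ℂ) (σ i)) ^ m * (σ j) ^ m := by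
      funext m
      push_cast
      rw [Finset.sum_mul, Finset.sum_mul]
      refine Finset.sum_congr rfl fun kl hkl => ?_
      rw [Finset.HasAntidiagonal.mem_antidiagonal] at hkl
      rw [← hkl, pow_add, pow_add]
      simp only [hF, hG]
      ring
    have hsum : Summable fun m => ∑ kl ∈ antidiagonal m, F kl.1 * G kl.2 :=
      (summable_norm_sum_mul_antidiagonal_of_summable_norm hFn hGn).of_norm
    have hh := hsum.hasSum
    rw [← tsum_mul_tsum_eq_tsum_sum_antidiagonal_of_summable_norm hFn hGn,
      (hbh i j).tsum_eq, (hb'h i j).tsum_eq, key] at hh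
    exact hh

lemma goodKer_pow {n : ℕ} (σ : Fin n → ℂ) {M : Fin n → Fin n → ℂ}
    (h : GoodKer σ M) (k : ℕ) : GoodKer σ (fun i j => M i j ^ k) := by
  induction k with
  | zero => simpa using goodKer_one σ
  | succ k ih =>
      have := goodKer_mul σ ih h
      simpa [pow_succ] using this

lemma goodKer_log {n : ℕ} (α : ℝ) (hα : 0 ≤ α) (σ : Fin n → ℂ) (hσ : ∀ i, ‖σ i‖ < 1 / 2) :
    GoodKer σ (fun i j => -(α : ℂ) * Complex.log (1 - 4 * (starRingEnd ℂ) (σ i) * σ j)) := by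
  refine ⟨fun m => α * 4 ^ m / m, fun m => by positivity, fun i j => ?_, fun i j => ?_⟩
  · have hq : 4 * (‖σ i‖ * ‖σ j‖) < 1 := by
      have h1 := hσ i; have h2 := hσ j
      have h1' := norm_nonneg (σ i); have h2' := norm_nonneg (σ j)
      nlinarith
    have hq0 : 0 ≤ 4 * (‖σ i‖ * ‖σ j‖) := by positivity
    refine Summable.of_nonneg_of_le
      (fun m => mul_nonneg (div_nonneg (mul_nonneg hα (by positivity)) (by positivity))
        (by positivity)) (fun m => ?_)
      ((summable_geometric_of_lt_one hq0 hq).mul_left α)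
    rcases Nat.eq_zero_or_pos m with rfl | hm
    · simpa using hα
    · have : α * 4 ^ m / m * (‖σ i‖ * ‖σ j‖) ^ m ≤ α * 4 ^ m * (‖σ i‖ * ‖σ j‖) ^ m := by
        apply mul_le_mul_of_nonneg_right _ (by positivity)
        apply div_le_self (mul_nonneg hα (by positivity))
        exact_mod_cast Nat.one_le_iff_ne_zero.mpr hm.ne'
      calc α * 4 ^ m / ↑m * (‖σ i‖ * ‖σ j‖) ^ m ≤ α * 4 ^ m * (‖σ i‖ * ‖σ j‖) ^ m := this
        _ = α * (4 * (‖σ i‖ * ‖σ j‖)) ^ m := by rw [mul_pow]; ring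
  · set z : ℂ := 4 * (starRingEnd ℂ) (σ i) * σ j with hz
    have hz1 : ‖z‖ < 1 := by
      have h1 := hσ i; have h2 := hσ j
      have h1' := norm_nonneg (σ i); have h2' := norm_nonneg (σ j)
      have : ‖z‖ = 4 * (‖σ i‖ * ‖σ j‖) := by
        simp [hz, norm_mul, mul_assoc]
      rw [this]; nlinarith
    have hs := (hasSum_taylorSeries_neg_log hz1).mul_left (α : ℂ)
    have : (α : ℂ) * -Complex.log (1 - z) = -(α : ℂ) * Complex.log (1 - z) := by ring
    rw [this] at hs
    have hfun : (fun m : ℕ => ((α * 4 ^ m / m : ℝ) : ℂ) * ((starRingEnd ℂ) (σ i)) ^ m * (σ j) ^ m)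
        = fun m : ℕ => (α : ℂ) * (z ^ m / m) := by
      funext m
      push_cast
      rw [hz]
      ring
    rw [hfun]
    exact hs

/-- The kernel `(σ, ρ) ↦ exp (-α log (1 - 4 conj σ * ρ)) = (1 - 4 conj σ * ρ)^(-α)` is
positive semidefinite on the disk `{z : |z| < 1/2}` for every `α ≥ 0`. -/
theorem kernel_posSemidef_disk (n : ℕ) (α : ℝ) (hα : 0 ≤ α)
    (σ : Fin n → ℂ) (hσ : ∀ i, ‖σ i‖ < 1 / 2) (c : Fin n → ℂ) :
    ∃ r : ℝ, 0 ≤ r ∧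
      ∑ i, ∑ j, (starRingEnd ℂ) (c i) * c j *
        Complex.exp (-(α : ℂ) * Complex.log (1 - 4 * (starRingEnd ℂ) (σ i) * σ j)) = (r : ℂ) := by
  set L : Fin n → Fin n → ℂ :=
    fun i j => -(α : ℂ) * Complex.log (1 - 4 * (starRingEnd ℂ) (σ i) * σ j) with hL
  -- Step 1: every kernel `L ^ k` gives a nonnegative real quadratic form.
  have step1 : ∀ k : ℕ, ∃ u : ℝ, 0 ≤ u ∧
      (∑ i, ∑ j, (starRingEnd ℂ) (c i) * c j * L i j ^ k) = (u : ℂ) := by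
    intro k
    obtain ⟨b, hb0, hbs, hbh⟩ := goodKer_pow σ (goodKer_log α hα σ hσ) k
    set S : ℕ → ℂ := fun m => ∑ j, c j * σ j ^ m with hS
    have hsum : HasSum
        (fun m : ℕ => ∑ i, ∑ j, (starRingEnd ℂ) (c i) * c j *
          ((b m : ℂ) * ((starRingEnd ℂ) (σ i)) ^ m * (σ j) ^ m))
        (∑ i, ∑ j, (starRingEnd ℂ) (c i) * c j * L i j ^ k) := by
      refine hasSum_sum fun i _ => hasSum_sum fun j _ => ?_
      exact (hbh i j).mul_left _
    have key : (fun m : ℕ => ∑ i, ∑ j, (starRingEnd ℂ) (c i) * c j *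
          ((b m : ℂ) * ((starRingEnd ℂ) (σ i)) ^ m * (σ j) ^ m))
        = fun m : ℕ => ((b m * ‖S m‖ ^ 2 : ℝ) : ℂ) := by
      funext m
      have h1 : ((‖S m‖ ^ 2 : ℝ) : ℂ) = (starRingEnd ℂ) (S m) * S m := by
        rw [← Complex.normSq_eq_conj_mul_self, Complex.normSq_eq_norm_sq]
      rw [Complex.ofReal_mul, h1, hS, map_sum, Finset.sum_mul_sum, Finset.mul_sum]
      refine Finset.sum_congr rfl fun i _ => ?_
      rw [Finset.mul_sum]
      refine Finset.sum_congr rfl fun j _ => ?_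
      simp only [map_mul, map_pow]
      ring
    rw [key] at hsum
    have him := Complex.hasSum_iff _ _ |>.mp hsum
    have hre : HasSum (fun m => b m * ‖S m‖ ^ 2)
        ((∑ i, ∑ j, (starRingEnd ℂ) (c i) * c j * L i j ^ k).re) := by
      have h := him.1
      simp only [Complex.ofReal_re] at h
      exact h
    have him0 : (∑ i, ∑ j, (starRingEnd ℂ) (c i) * c j * L i j ^ k).im = 0 := by
      have := him.2
      simp only [Complex.ofReal_im] at this
      exact (hasSum_zero.unique this).symm
    refine ⟨(∑ i, ∑ j, (starRingEnd ℂ) (c i) * c j * L i j ^ k).re, ?_, ?_⟩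
    · exact hasSum_le (fun m => mul_nonneg (hb0 m) (by positivity)) hasSum_zero hre
    · exact (Complex.ext (by simp) (by simp [him0])).symm
  choose u hu0 hu using step1
  -- Step 2: expand the exponential.
  have hexp : HasSum (fun k : ℕ => ((u k / k.factorial : ℝ) : ℂ))
      (∑ i, ∑ j, (starRingEnd ℂ) (c i) * c j * Complex.exp (L i j)) := by
    have hx : ∀ i j, HasSum (fun k : ℕ => (starRingEnd ℂ) (c i) * c j * (L i j ^ k / k.factorial))
        ((starRingEnd ℂ) (c i) * c j * Complex.exp (L i j)) := by
      intro i j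
      have := NormedSpace.expSeries_div_hasSum_exp (L i j)
      rw [← Complex.exp_eq_exp_ℂ] at this
      exact this.mul_left _
    have hsum : HasSum
        (fun k : ℕ => ∑ i, ∑ j, (starRingEnd ℂ) (c i) * c j * (L i j ^ k / k.factorial))
        (∑ i, ∑ j, (starRingEnd ℂ) (c i) * c j * Complex.exp (L i j)) :=
      hasSum_sum fun i _ => hasSum_sum fun j _ => hx i j
    have key : (fun k : ℕ => ∑ i, ∑ j, (starRingEnd ℂ) (c i) * c j * (L i j ^ k / k.factorial))
        = fun k : ℕ => ((u k / k.factorial : ℝ) : ℂ) := by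
      funext k
      have : ∑ i, ∑ j, (starRingEnd ℂ) (c i) * c j * (L i j ^ k / k.factorial)
          = (∑ i, ∑ j, (starRingEnd ℂ) (c i) * c j * L i j ^ k) / k.factorial := by
        rw [Finset.sum_div]
        refine Finset.sum_congr rfl fun i _ => ?_
        rw [Finset.sum_div]
        refine Finset.sum_congr rfl fun j _ => ?_
        ring
      rw [this, hu k]
      push_cast
      ring
    rw [key] at hsum
    exact hsum
  set T : ℂ := ∑ i, ∑ j, (starRingEnd ℂ) (c i) * c j * Complex.exp (L i j) with hT
  have him := Complex.hasSum_iff _ _ |>.mp hexp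
  have hTim : T.im = 0 := by
    have := him.2
    simp only [Complex.ofReal_im] at this
    exact (hasSum_zero.unique this).symm
  have hTre : 0 ≤ T.re := by
    have hre : HasSum (fun k => u k / (k.factorial : ℝ)) T.re := by
      have h := him.1
      simp only [Complex.ofReal_re] at h
      exact h
    exact hasSum_le (fun k => div_nonneg (hu0 k) (by positivity)) hasSum_zero hre
  exact ⟨T.re, hTre, (Complex.ext (by simp) (by simp [hTim])).symm⟩
end

section
/- Let c > 0 and let f : ℝ^d → ℂ be a measurable function in L²(ℝ^d) with |f(t)| ≤ b almost everywhere for some constant b < 1/2. Let (fₙ) be a sequence of simple functions with |fₙ(t)| ≤ |f(t)| for all t and fₙ → f in L²(ℝ^d). Then exp(−(c/2)·∫_{ℝ^d} Real.log(1 − 4|fₙ(t)|²) dt) → exp(−(c/2)·∫_{ℝ^d} Real.log(1 − 4|f(t)|²) dt) as n → ∞. -/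
open MeasureTheory Filter Topology

lemma log_diff_le_aux {x y δ : ℝ} (hy0 : 0 ≤ y) (hyx : y ≤ x) (hx : x ≤ 1 - δ) (hδ : 0 < δ) :
    |Real.log (1 - y) - Real.log (1 - x)| ≤ (x - y) / δ := by
  have h1x : (0:ℝ) < 1 - x := by linarith
  have h1y : (0:ℝ) < 1 - y := by linarith
  have hd : 0 ≤ Real.log (1 - y) - Real.log (1 - x) :=
    sub_nonneg.2 (Real.log_le_log h1x (by linarith))
  rw [abs_of_nonneg hd]
  have h := Real.log_le_sub_one_of_pos (div_pos h1y h1x)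
  rw [Real.log_div (ne_of_gt h1y) (ne_of_gt h1x)] at h
  have heq : (1 - y) / (1 - x) - 1 = (x - y) / (1 - x) := by field_simp; ring
  rw [heq] at h
  refine h.trans ?_
  gcongr
  · linarith

lemma log_abs_le_aux {x δ : ℝ} (hx0 : 0 ≤ x) (hx : x ≤ 1 - δ) (hδ : 0 < δ) :
    |Real.log (1 - x)| ≤ x / δ := by
  have := log_diff_le_aux (le_refl 0) hx0 hx hδ
  simpa using this

/-- If simple functions `fₙ` satisfy `|fₙ| ≤ |f|` pointwise and `fₙ → f` in L², with
`f ∈ L²` and `|f| ≤ b < 1/2` a.e., then the squared norms of the quadratic exponential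
vectors converge: `exp (-(c/2) ∫ log (1 - 4 |fₙ|²)) → exp (-(c/2) ∫ log (1 - 4 |f|²))`. -/
theorem tendsto_exp_vector_norms (d : ℕ) (c : ℝ) (hc : 0 < c)
    (f : (Fin d → ℝ) → ℂ) (hf : Measurable f) (hf2 : MemLp f 2 volume)
    (b : ℝ) (hb : b < 1 / 2) (hfb : ∀ᵐ t ∂volume, ‖f t‖ ≤ b)
    (s : ℕ → SimpleFunc (Fin d → ℝ) ℂ)
    (hbd : ∀ n, ∀ t, ‖s n t‖ ≤ ‖f t‖)
    (hconv : Tendsto (fun n => eLpNorm (fun t => s n t - f t) 2 volume) atTop (𝓝 0)) :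
    Tendsto (fun n => Real.exp (-(c / 2) * ∫ t, Real.log (1 - 4 * ‖s n t‖ ^ 2))) atTop
      (𝓝 (Real.exp (-(c / 2) * ∫ t, Real.log (1 - 4 * ‖f t‖ ^ 2)))) := by
  set b' : ℝ := max b 0 with hb'def
  have hb'0 : 0 ≤ b' := le_max_right _ _
  have hb'lt : b' < 1 / 2 := max_lt hb (by norm_num)
  set δ : ℝ := 1 - 4 * b' ^ 2 with hδdef
  have hδ : 0 < δ := by nlinarith
  have hfb' : ∀ᵐ t ∂volume, ‖f t‖ ≤ b' := hfb.mono fun t ht => ht.trans (le_max_left _ _)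
  -- a.e. key bounds
  have hxfb : ∀ᵐ t ∂volume, 4 * ‖f t‖ ^ 2 ≤ 1 - δ := by
    filter_upwards [hfb'] with t ht
    have h0 : 0 ≤ ‖f t‖ := norm_nonneg _
    nlinarith
  -- memℒp of s n and s n - f
  have hsmem : ∀ n, MemLp (fun t => (s n t : ℂ)) 2 volume :=
    fun n => hf2.of_le ((s n).aestronglyMeasurable)
      (Eventually.of_forall fun t => hbd n t)
  have hgmem : ∀ n, MemLp (fun t => s n t - f t) 2 volume := fun n => (hsmem n).sub hf2
  -- integrability of ‖f‖², and of the logs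
  have hfsq : Integrable (fun t => ‖f t‖ ^ 2) volume :=
    (memLp_two_iff_integrable_sq_norm hf2.1).mp hf2
  have hLfmeas : Measurable fun t => Real.log (1 - 4 * ‖f t‖ ^ 2) :=
    (Real.measurable_log.comp ((measurable_const.sub
      (((hf.norm).pow_const 2).const_mul 4))))
  have hLf : Integrable (fun t => Real.log (1 - 4 * ‖f t‖ ^ 2)) volume := by
    refine (hfsq.const_mul (4 / δ)).mono' hLfmeas.aestronglyMeasurable ?_
    filter_upwards [hxfb] with t ht
    have h0 : 0 ≤ 4 * ‖f t‖ ^ 2 := by positivity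
    have := log_abs_le_aux h0 ht hδ
    calc ‖Real.log (1 - 4 * ‖f t‖ ^ 2)‖ = |Real.log (1 - 4 * ‖f t‖ ^ 2)| := rfl
      _ ≤ 4 * ‖f t‖ ^ 2 / δ := this
      _ = 4 / δ * ‖f t‖ ^ 2 := by ring
  have hLs : ∀ n, Integrable (fun t => Real.log (1 - 4 * ‖s n t‖ ^ 2)) volume := by
    intro n
    have hm : Measurable fun t => Real.log (1 - 4 * ‖s n t‖ ^ 2) :=
      (Real.measurable_log.comp ((measurable_const.sub
        ((((s n).measurable.norm).pow_const 2).const_mul 4))))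
    refine (hfsq.const_mul (4 / δ)).mono' hm.aestronglyMeasurable ?_
    filter_upwards [hxfb] with t ht
    have hsle : ‖s n t‖ ≤ ‖f t‖ := hbd n t
    have h0 : 0 ≤ 4 * ‖s n t‖ ^ 2 := by positivity
    have hle : 4 * ‖s n t‖ ^ 2 ≤ 1 - δ := by nlinarith [norm_nonneg (s n t), norm_nonneg (f t)]
    have := log_abs_le_aux h0 hle hδ
    calc ‖Real.log (1 - 4 * ‖s n t‖ ^ 2)‖ = |Real.log (1 - 4 * ‖s n t‖ ^ 2)| := rfl
      _ ≤ 4 * ‖s n t‖ ^ 2 / δ := this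
      _ ≤ 4 * ‖f t‖ ^ 2 / δ := by gcongr
      _ = 4 / δ * ‖f t‖ ^ 2 := by ring
  -- Cauchy–Schwarz: ∫ ‖f‖ ‖sₙ − f‖ ≤ Cf * Nn
  set Cf : ℝ := (∫ t, ‖f t‖ ^ (2:ℝ)) ^ ((1:ℝ)/2) with hCf
  have key : ∀ n, |(∫ t, Real.log (1 - 4 * ‖s n t‖ ^ 2)) -
      ∫ t, Real.log (1 - 4 * ‖f t‖ ^ 2)| ≤
      8 / δ * (Cf * (∫ t, ‖s n t - f t‖ ^ (2:ℝ)) ^ ((1:ℝ)/2)) := by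
    intro n
    rw [← integral_sub (hLs n) hLf]
    -- product integrable
    have hprod : Integrable (fun t => ‖f t‖ * ‖s n t - f t‖) volume := by
      have h1 : Integrable (fun t => ‖s n t - f t‖ ^ 2) volume :=
        (memLp_two_iff_integrable_sq_norm (hgmem n).1).mp (hgmem n)
      refine ((hfsq.add h1).const_mul (1/2)).mono'
        ((hf.norm.mul ((s n).measurable.sub hf).norm).aestronglyMeasurable) ?_
      refine Eventually.of_forall fun t => ?_
      simp only [Pi.add_apply, Real.norm_eq_abs]
      rw [abs_of_nonneg (by positivity)]
      nlinarith [sq_nonneg (‖f t‖ - ‖s n t - f t‖), norm_nonneg (f t), norm_nonneg (s n t - f t)]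
    calc |∫ t, (Real.log (1 - 4 * ‖s n t‖ ^ 2) - Real.log (1 - 4 * ‖f t‖ ^ 2))|
        ≤ ∫ t, |Real.log (1 - 4 * ‖s n t‖ ^ 2) - Real.log (1 - 4 * ‖f t‖ ^ 2)| := by
          simpa [Real.norm_eq_abs] using
            norm_integral_le_integral_norm (μ := volume)
              (fun t => Real.log (1 - 4 * ‖s n t‖ ^ 2) - Real.log (1 - 4 * ‖f t‖ ^ 2))
      _ ≤ ∫ t, 8 / δ * (‖f t‖ * ‖s n t - f t‖) := by
          refine integral_mono_of_nonneg (Eventually.of_forall fun t => abs_nonneg _)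
            (hprod.const_mul _) ?_
          filter_upwards [hxfb] with t ht
          have hsle : ‖s n t‖ ≤ ‖f t‖ := hbd n t
          have h0 : 0 ≤ 4 * ‖s n t‖ ^ 2 := by positivity
          have hyx : 4 * ‖s n t‖ ^ 2 ≤ 4 * ‖f t‖ ^ 2 := by
            nlinarith [norm_nonneg (s n t)]
          have hlog := log_diff_le_aux h0 hyx ht hδ
          refine hlog.trans ?_
          have hnorm : ‖f t‖ - ‖s n t‖ ≤ ‖s n t - f t‖ := by
            calc ‖f t‖ - ‖s n t‖ ≤ ‖f t - s n t‖ := norm_sub_norm_le _ _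
              _ = ‖s n t - f t‖ := norm_sub_rev _ _
          have h8 : 8 / δ * (‖f t‖ * ‖s n t - f t‖)
              = 8 * (‖f t‖ * ‖s n t - f t‖) / δ := by ring
          rw [h8]
          gcongr
          nlinarith [mul_le_mul_of_nonneg_left hnorm
              (by positivity : (0:ℝ) ≤ ‖f t‖ + ‖s n t‖),
            mul_le_mul_of_nonneg_right (by linarith : ‖f t‖ + ‖s n t‖ ≤ 2 * ‖f t‖)
              (norm_nonneg (s n t - f t))]
      _ = 8 / δ * ∫ t, ‖f t‖ * ‖s n t - f t‖ := integral_const_mul _ _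
      _ ≤ 8 / δ * (Cf * (∫ t, ‖s n t - f t‖ ^ (2:ℝ)) ^ ((1:ℝ)/2)) := by
          have hpq : Real.HolderConjugate 2 2 :=
            Real.HolderConjugate.two_two
          have h2 : (ENNReal.ofReal (2:ℝ)) = 2 := by norm_num
          have hF : MemLp (fun t => ‖f t‖) (ENNReal.ofReal (2:ℝ)) volume := by
            rw [h2]; exact hf2.norm
          have hG : MemLp (fun t => ‖s n t - f t‖) (ENNReal.ofReal (2:ℝ)) volume := by
            rw [h2]; exact (hgmem n).norm
          have := MeasureTheory.integral_mul_le_Lp_mul_Lq_of_nonneg hpq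
            (Eventually.of_forall fun t => norm_nonneg (f t))
            (Eventually.of_forall fun t => norm_nonneg (s n t - f t)) hF hG
          have hδ' : 0 ≤ 8 / δ := by positivity
          exact mul_le_mul_of_nonneg_left this hδ'
  -- Nn → 0
  have hNn : Tendsto (fun n => (∫ t, ‖s n t - f t‖ ^ (2:ℝ)) ^ ((1:ℝ)/2)) atTop (𝓝 0) := by
    have htoReal : Tendsto (fun n => (eLpNorm (fun t => s n t - f t) 2 volume).toReal)
        atTop (𝓝 0) := by
      have := (ENNReal.tendsto_toReal ENNReal.zero_ne_top).comp hconv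
      simpa [Function.comp_def] using this
    have heq : ∀ n, (eLpNorm (fun t => s n t - f t) 2 volume).toReal
        = (∫ t, ‖s n t - f t‖ ^ (2:ℝ)) ^ ((1:ℝ)/2) := by
      intro n
      rw [(hgmem n).eLpNorm_eq_integral_rpow_norm two_ne_zero ENNReal.ofNat_ne_top]
      rw [ENNReal.toReal_ofReal (by positivity)]
      norm_num
    exact htoReal.congr heq
  -- integrals converge
  have hI : Tendsto (fun n => ∫ t, Real.log (1 - 4 * ‖s n t‖ ^ 2)) atTop
      (𝓝 (∫ t, Real.log (1 - 4 * ‖f t‖ ^ 2))) := by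
    rw [tendsto_iff_dist_tendsto_zero]
    refine squeeze_zero
      (g := fun n => 8 / δ * (Cf * (∫ t, ‖s n t - f t‖ ^ (2:ℝ)) ^ ((1:ℝ)/2)))
      (fun n => dist_nonneg) (fun n => ?_) ?_
    · exact (by simpa [Real.dist_eq] using key n)
    · have := hNn.const_mul Cf
      have := (this).const_mul (8 / δ)
      simpa using this
  exact (Real.continuous_exp.tendsto _).comp (hI.const_mul (-(c/2)))
end
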